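/- If A is an irreducible n×n nonnegative matrix with cyclic index p (the number of eigenvalues of modulus ρ(A)), then there exists a positive integer s such that A^{m·s·p+1} is irreducible for every nonnegative integer m. -/

import Mathlib

open Matrix Complex

noncomputable def specRad {n : ℕ} (A : Matrix (Fin n) (Fin n) ℂ) : ℝ :=
  sSup ((fun z : ℂ => ‖z‖) '' spectrum ℂ A)

def MatIrredR {n : ℕ} (A : Matrix (Fin n) (Fin n) ℝ) : Prop :=
  ∀ S : Set (Fin n), S.Nonempty → S ≠ Set.univ → ∃ i ∈ S, ∃ j ∉ S, A i j ≠ 0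

private lemma powEntry_nonneg {n : ℕ} {A : Matrix (Fin n) (Fin n) ℝ}
    (hA : ∀ i j, 0 ≤ A i j) : ∀ (t : ℕ) (i j : Fin n), 0 ≤ (A ^ t) i j := by
  intro t
  induction t with
  | zero =>
    intro i j
    rw [pow_zero]
    by_cases h : i = j <;> simp [Matrix.one_apply, h]
  | succ t ih =>
    intro i j
    rw [pow_succ, Matrix.mul_apply]
    exact Finset.sum_nonneg fun k _ => mul_nonneg (ih i k) (hA k j)

private lemma powEntry_mul_pos {n : ℕ} {A : Matrix (Fin n) (Fin n) ℝ}
    (hA : ∀ i j, 0 ≤ A i j) {t u : ℕ} {i k j : Fin n}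
    (h1 : 0 < (A ^ t) i k) (h2 : 0 < (A ^ u) k j) : 0 < (A ^ (t + u)) i j := by
  rw [pow_add, Matrix.mul_apply]
  refine lt_of_lt_of_le (mul_pos h1 h2) ?_
  exact Finset.single_le_sum (f := fun x => (A ^ t) i x * (A ^ u) x j)
    (fun x _ => mul_nonneg (powEntry_nonneg hA t i x) (powEntry_nonneg hA u x j))
    (Finset.mem_univ k)

private lemma powEntry_mid {n : ℕ} {A : Matrix (Fin n) (Fin n) ℝ}
    (hA : ∀ i j, 0 ≤ A i j) {t u : ℕ} {i j : Fin n}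
    (h : 0 < (A ^ (t + u)) i j) : ∃ k, 0 < (A ^ t) i k ∧ 0 < (A ^ u) k j := by
  rw [pow_add, Matrix.mul_apply] at h
  obtain ⟨k, -, hk⟩ := Finset.exists_ne_zero_of_sum_ne_zero (ne_of_gt h)
  refine ⟨k, ?_, ?_⟩
  · exact lt_of_le_of_ne (powEntry_nonneg hA t i k) (fun hc => hk (by rw [← hc]; ring))
  · exact lt_of_le_of_ne (powEntry_nonneg hA u k j) (fun hc => hk (by rw [← hc]; ring))

private lemma irred_of_le_one {n : ℕ} (hn : n ≤ 1) (B : Matrix (Fin n) (Fin n) ℝ) :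
    MatIrredR B := by
  intro S hS hSne
  exfalso
  apply hSne
  obtain ⟨y, hy⟩ := hS
  ext x
  simp only [Set.mem_univ, iff_true]
  have hx := x.2
  have hy2 := y.2
  have : x = y := Fin.ext (by omega)
  rwa [this]

private lemma reach_aux {n : ℕ} {A : Matrix (Fin n) (Fin n) ℝ}
    (hA : ∀ i j, 0 ≤ A i j) (hirr : MatIrredR A) (hn : 1 < n) :
    ∀ i j : Fin n, ∃ t, 1 ≤ t ∧ 0 < (A ^ t) i j := by
  intro i j
  set R : Set (Fin n) := {b | ∃ t, 1 ≤ t ∧ 0 < (A ^ t) i b} with hR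
  have edge_pos : ∀ a b : Fin n, A a b ≠ 0 → 0 < (A ^ 1) a b := by
    intro a b hab
    rw [pow_one]
    exact lt_of_le_of_ne (hA a b) (Ne.symm hab)
  have hR1 : R.Nonempty := by
    have hsingle : ({i} : Set (Fin n)) ≠ Set.univ := by
      intro hc
      have h2 : (⟨1 - i.val, by omega⟩ : Fin n) ∈ ({i} : Set (Fin n)) :=
        hc ▸ Set.mem_univ _
      have := Fin.mk_eq_mk.1 h2
      have hi := i.2
      omega
    obtain ⟨a, ha, b, hb, hab⟩ := hirr {i} ⟨i, rfl⟩ hsingle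
    have haa : a = i := ha
    subst haa
    exact ⟨b, 1, le_refl 1, edge_pos a b hab⟩
  have hRuniv : R = Set.univ := by
    by_contra hne
    obtain ⟨a, ha, b, hb, hab⟩ := hirr R hR1 hne
    obtain ⟨t, ht, hpos⟩ := ha
    exact hb ⟨t + 1, by omega, powEntry_mul_pos hA hpos (edge_pos a b hab)⟩
  have : j ∈ R := hRuniv ▸ Set.mem_univ j
  exact this

theorem stmt_6 {n : ℕ} (A : Matrix (Fin n) (Fin n) ℝ) (hA : ∀ i j, 0 ≤ A i j)
    (hirr : MatIrredR A) (p : ℕ)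
    (hp : p = Set.ncard {lam : ℂ | lam ∈ spectrum ℂ (A.map (Complex.ofReal)) ∧
      ‖lam‖ = specRad (A.map (Complex.ofReal))}) :
    ∃ s : ℕ, 0 < s ∧ ∀ m : ℕ, MatIrredR (A ^ (m * s * p + 1)) := by
  by_cases hn : n ≤ 1
  · exact ⟨1, one_pos, fun m => irred_of_le_one hn _⟩
  push_neg at hn
  choose L hL1 hLpos using reach_aux hA hirr hn
  set c : Fin n → ℕ := fun i => L i i with hc
  set s : ℕ := ∏ i, c i with hs
  have hspos : 0 < s := Finset.prod_pos fun i _ => hL1 i i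
  refine ⟨s, hspos, fun m => ?_⟩
  set k : ℕ := m * s * p + 1 with hk
  haveI : NeZero k := ⟨Nat.succ_ne_zero _⟩
  -- key: for all i j there is r ≥ 1 with (A^(k*r)) i j > 0
  have key : ∀ i j : Fin n, ∃ r, 1 ≤ r ∧ 0 < (A ^ (k * r)) i j := by
    intro i j
    have hdvd : c i ∣ m * s * p := by
      have h1 : c i ∣ s := Finset.dvd_prod_of_mem c (Finset.mem_univ i)
      exact (h1.mul_left m).mul_right p
    have hcop : Nat.Coprime (c i) k := by
      obtain ⟨q, hq⟩ := hdvd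
      rw [hk, hq, Nat.add_comm]
      exact (Nat.coprime_add_mul_left_right (c i) 1 q).2 (Nat.coprime_one_right (c i))
    obtain ⟨a, ha⟩ : ∃ a : ℕ, k ∣ L i j + a * c i := by
      have hu : IsUnit ((c i : ZMod k)) := (ZMod.isUnit_iff_coprime (c i) k).2 hcop
      set u := hu.unit with husp
      set y : ZMod k := (-(L i j : ZMod k)) * ↑u⁻¹ with hy
      refine ⟨y.val, ?_⟩
      rw [← ZMod.natCast_eq_zero_iff]
      push_cast
      rw [ZMod.natCast_val y |>.trans (ZMod.cast_id _ _)]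
      have huc : (↑u : ZMod k) = (c i : ZMod k) := hu.unit_spec
      have hyc : y * (c i : ZMod k) = -(L i j : ZMod k) := by
        rw [hy, ← huc, mul_assoc, Units.inv_mul, mul_one]
      rw [hyc]
      ring
    have hwalk : ∀ b : ℕ, 0 < (A ^ (b * c i + L i j)) i j := by
      intro b
      induction b with
      | zero => simpa using hLpos i j
      | succ b ih =>
        have he : (b + 1) * c i + L i j = c i + (b * c i + L i j) := by ring
        rw [he]
        exact powEntry_mul_pos hA (hLpos i i) ih
    obtain ⟨r, hr⟩ := ha
    have hT1 : 1 ≤ L i j + a * c i := le_trans (hL1 i j) (Nat.le_add_right _ _)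
    have hrpos : 1 ≤ r := by
      rcases Nat.eq_zero_or_pos r with h0 | h1
      · rw [h0, Nat.mul_zero] at hr; omega
      · exact h1
    refine ⟨r, hrpos, ?_⟩
    have he2 : k * r = a * c i + L i j := by omega
    rw [he2]
    exact hwalk a
  -- cross lemma
  have cross : ∀ (r : ℕ) (i j : Fin n) (S : Set (Fin n)), i ∈ S → j ∉ S →
      0 < (A ^ (k * r)) i j → ∃ a ∈ S, ∃ b ∉ S, 0 < (A ^ k) a b := by
    intro r
    induction r with
    | zero =>
      intro i j S hi hj hpos
      rw [Nat.mul_zero, pow_zero] at hpos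
      have hij : i ≠ j := fun h => hj (h ▸ hi)
      rw [Matrix.one_apply_ne hij] at hpos
      exact absurd hpos (lt_irrefl 0)
    | succ r ih =>
      intro i j S hi hj hpos
      have he : k * (r + 1) = k + k * r := by ring
      rw [he] at hpos
      obtain ⟨b, hb1, hb2⟩ := powEntry_mid hA hpos
      by_cases hbS : b ∈ S
      · exact ih b j S hbS hj hb2
      · exact ⟨i, hi, b, hbS, hb1⟩
  intro S hS hSu
  obtain ⟨i, hi⟩ := hS
  obtain ⟨j, hj⟩ := (Set.ne_univ_iff_exists_notMem S).1 hSu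
  obtain ⟨r, hr1, hrpos⟩ := key i j
  obtain ⟨a, haS, b, hbS, hab⟩ := cross r i j S hi hj hrpos
  exact ⟨a, haS, b, hbS, ne_of_gt hab⟩
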